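/- Let n ≥ 1 be a natural number, let x₀ be a real number, and let v : ℝ → ℝ be n times differentiable in a neighborhood of x₀ with v positive in a neighborhood of x₀. Then the n-th derivative of x ↦ ln(v(x)) at x₀ equals n! · Σ_{y} [ ( (Σᵢ yᵢ − 1)! · (−1)^{(Σᵢ yᵢ) − 1} / v(x₀)^{Σᵢ yᵢ} ) · Πᵢ₌₁ⁿ (1/yᵢ!) · ( v⁽ⁱ⁾(x₀)/i! )^{yᵢ} ], where the sum runs over all tuples y = (y₁, …, yₙ) of nonnegative integers satisfying Σᵢ₌₁ⁿ i·yᵢ = n (for each such tuple Σᵢ yᵢ ≥ 1 since n ≥ 1). -/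

import Mathlib

open Finset Filter

/-- Index set: tuples `y : Fin M → ℕ` with `∑ (i+1) * y i = m`. -/
def PS (M m : ℕ) : Finset (Fin M → ℕ) :=
  (Fintype.piFinset fun _ : Fin M => Finset.range (m + 1)).filter
    (fun y => ∑ i : Fin M, ((i : ℕ) + 1) * y i = m)

noncomputable def gT (v : ℝ → ℝ) (M : ℕ) (y : Fin M → ℕ) (x : ℝ) : ℝ :=
  (((∑ i, y i) - 1).factorial : ℝ) * (-1) ^ ((∑ i, y i) - 1) / (v x) ^ (∑ i, y i) *
    ∏ i : Fin M, (1 / ((y i).factorial : ℝ)) *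
      (iteratedDeriv ((i : ℕ) + 1) v x / (((i : ℕ) + 1).factorial : ℝ)) ^ y i

lemma sum_eq_of_mem_PS {M m : ℕ} {y : Fin M → ℕ} (h : y ∈ PS M m) :
    ∑ i : Fin M, ((i : ℕ) + 1) * y i = m := (Finset.mem_filter.1 h).2

lemma mem_PS {M m : ℕ} {y : Fin M → ℕ} (h : ∑ i : Fin M, ((i : ℕ) + 1) * y i = m) :
    y ∈ PS M m := by
  refine Finset.mem_filter.2 ⟨Fintype.mem_piFinset.2 fun i => ?_, h⟩
  have h1 : ((i : ℕ) + 1) * y i ≤ m := h ▸ Finset.single_le_sum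
    (f := fun i : Fin M => ((i : ℕ) + 1) * y i) (fun _ _ => Nat.zero_le _) (Finset.mem_univ i)
  have : y i ≤ m := le_trans (Nat.le_mul_of_pos_left _ (Nat.succ_pos _)) h1
  exact Finset.mem_range.2 (Nat.lt_succ_of_le this)

lemma one_le_sum_of_mem_PS {M m : ℕ} {y : Fin M → ℕ} (h : y ∈ PS M m) (hm : 1 ≤ m) :
    1 ≤ ∑ i, y i := by
  by_contra hs
  push_neg at hs
  have hsum : ∑ i, y i = 0 := by omega
  have hz : ∀ i ∈ Finset.univ, y i = 0 := fun i _ => Finset.sum_eq_zero_iff.1 hsum i (Finset.mem_univ i)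
  have hs2 := sum_eq_of_mem_PS h
  rw [Finset.sum_congr rfl (fun i hi => by rw [hz i hi, Nat.mul_zero])] at hs2
  simp at hs2
  omega

lemma last_eq_zero_of_mem_PS {n : ℕ} {y : Fin (n + 1) → ℕ} (h : y ∈ PS (n + 1) n) :
    y (Fin.last n) = 0 := by
  have hs := sum_eq_of_mem_PS h
  have h1 : ((Fin.last n : ℕ) + 1) * y (Fin.last n) ≤ ∑ i : Fin (n + 1), ((i : ℕ) + 1) * y i :=
    Finset.single_le_sum (f := fun i : Fin (n + 1) => ((i : ℕ) + 1) * y i)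
      (fun _ _ => Nat.zero_le _) (Finset.mem_univ _)
  rw [hs] at h1
  simp [Fin.val_last] at h1
  rcases Nat.eq_zero_or_pos (y (Fin.last n)) with h0 | h0
  · exact h0
  · have := Nat.le_mul_of_pos_right (n + 1) h0
    omega

/-- Bridge: extend index type by one coordinate. -/
lemma sum_PS_succ (v : ℝ → ℝ) (x : ℝ) (n : ℕ) :
    ∑ y ∈ PS n n, gT v n y x = ∑ z ∈ PS (n + 1) n, gT v (n + 1) z x := by
  refine Finset.sum_nbij' (i := fun y => Fin.snoc y 0) (j := fun z => z ∘ Fin.castSucc)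
    ?_ ?_ ?_ ?_ ?_
  · intro y hy
    refine mem_PS ?_
    rw [Fin.sum_univ_castSucc]
    simpa using sum_eq_of_mem_PS hy
  · intro z hz
    refine mem_PS ?_
    have hs := sum_eq_of_mem_PS hz
    rw [Fin.sum_univ_castSucc, last_eq_zero_of_mem_PS hz] at hs
    simpa using hs
  · intro y _
    funext i
    simp
  · intro z hz
    funext i
    refine Fin.lastCases ?_ ?_ i
    · simp [last_eq_zero_of_mem_PS hz]
    · intro i; simp
  · intro y hy
    unfold gT
    rw [Fin.sum_univ_castSucc, Fin.prod_univ_castSucc]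
    simp

lemma sum_coeff_update {M : ℕ} (c : Fin M → ℕ) (y : Fin M → ℕ) (k : Fin M) (m : ℕ) :
    (∑ i, c i * (Function.update y k m) i) + c k * y k = (∑ i, c i * y i) + c k * m := by
  classical
  rw [← Finset.add_sum_erase Finset.univ (fun i => c i * (Function.update y k m) i)
    (Finset.mem_univ k),
    ← Finset.add_sum_erase Finset.univ (fun i => c i * y i) (Finset.mem_univ k)]
  rw [Function.update_self,
    Finset.sum_congr rfl (fun i hi => by
      rw [Function.update_of_ne (Finset.ne_of_mem_erase hi)])]
  ring

lemma prod_update_erase {M : ℕ} (f : Fin M → ℕ → ℝ) (y : Fin M → ℕ) (k : Fin M) (m : ℕ) :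
    (∏ i, f i ((Function.update y k m) i)) = f k m * ∏ i ∈ Finset.univ.erase k, f i (y i) := by
  classical
  rw [← Finset.mul_prod_erase Finset.univ (fun i => f i ((Function.update y k m) i))
    (Finset.mem_univ k), Function.update_self]
  congr 1
  exact Finset.prod_congr rfl (fun i hi => by
    rw [Function.update_of_ne (Finset.ne_of_mem_erase hi)])

lemma prod_univ_eq_erase {M : ℕ} (f : Fin M → ℕ → ℝ) (y : Fin M → ℕ) (k : Fin M) :
    (∏ i, f i (y i)) = f k (y k) * ∏ i ∈ Finset.univ.erase k, f i (y i) :=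
  (Finset.mul_prod_erase Finset.univ (fun i => f i (y i)) (Finset.mem_univ k)).symm

lemma sum_erase_last {n : ℕ} (h : Fin (n + 1) → ℝ) :
    ∑ j ∈ Finset.univ.erase (Fin.last n), h j = ∑ j : Fin n, h j.castSucc := by
  have h1 : (∑ j ∈ Finset.univ.erase (Fin.last n), h j) + h (Fin.last n) = ∑ j, h j :=
    Finset.sum_erase_add _ _ (Finset.mem_univ _)
  rw [Fin.sum_univ_castSucc] at h1
  linarith

noncomputable def fct (v : ℝ → ℝ) (x : ℝ) (k m : ℕ) : ℝ :=
  (1 / (m.factorial : ℝ)) * (iteratedDeriv k v x / (k.factorial : ℝ)) ^ m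

lemma gT_eq (v : ℝ → ℝ) (M : ℕ) (y : Fin M → ℕ) (x : ℝ) :
    gT v M y x = (((∑ i, y i) - 1).factorial : ℝ) * (-1) ^ ((∑ i, y i) - 1) /
      (v x) ^ (∑ i, y i) * ∏ i : Fin M, fct v x ((i : ℕ) + 1) (y i) := rfl

lemma fct_zero (v : ℝ → ℝ) (x : ℝ) (k : ℕ) : fct v x k 0 = 1 := by
  simp [fct]

lemma hasDerivAt_gT (n : ℕ) (x₀ : ℝ) (v : ℝ → ℝ)
    (hdiff : ∀ i < n + 1, DifferentiableAt ℝ (iteratedDeriv i v) x₀)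
    (hv0 : v x₀ ≠ 0) (y : Fin (n + 1) → ℕ) (hy : y (Fin.last n) = 0) :
    HasDerivAt (fun x => gT v (n + 1) y x)
      ((((∑ i, y i) - 1).factorial : ℝ) * (-1) ^ ((∑ i, y i) - 1) *
        ((-(((∑ i, y i) : ℝ) * v x₀ ^ ((∑ i, y i) - 1) * iteratedDeriv 1 v x₀) /
            (v x₀ ^ (∑ i, y i)) ^ 2) *
          (∏ i ∈ Finset.univ.erase (Fin.last n), fct v x₀ ((i : ℕ) + 1) (y i)) +
        (v x₀ ^ (∑ i, y i))⁻¹ *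
          ∑ j ∈ Finset.univ.erase (Fin.last n),
            (∏ k ∈ (Finset.univ.erase (Fin.last n)).erase j, fct v x₀ ((k : ℕ) + 1) (y k)) •
              ((1 / ((y j).factorial : ℝ)) *
                (((y j : ℝ)) * (iteratedDeriv ((j : ℕ) + 1) v x₀ / (((j : ℕ) + 1).factorial : ℝ))
                    ^ (y j - 1) *
                  (iteratedDeriv ((j : ℕ) + 2) v x₀ / (((j : ℕ) + 1).factorial : ℝ)))))) x₀ := by
  classical
  set s := ∑ i, y i with hs
  have hvd : HasDerivAt v (iteratedDeriv 1 v x₀) x₀ := by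
    have h0 := (hdiff 0 (Nat.succ_pos n)).hasDerivAt
    rw [iteratedDeriv_zero] at h0
    rwa [iteratedDeriv_one]
  have hA : HasDerivAt (fun x => ((v x) ^ s)⁻¹)
      (-((s : ℝ) * v x₀ ^ (s - 1) * iteratedDeriv 1 v x₀) / (v x₀ ^ s) ^ 2) x₀ :=
    (hvd.pow s).inv (pow_ne_zero _ hv0)
  have hB : HasDerivAt (fun x => ∏ i ∈ Finset.univ.erase (Fin.last n),
      fct v x ((i : ℕ) + 1) (y i))
      (∑ j ∈ Finset.univ.erase (Fin.last n),
        (∏ k ∈ (Finset.univ.erase (Fin.last n)).erase j, fct v x₀ ((k : ℕ) + 1) (y k)) •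
          ((1 / ((y j).factorial : ℝ)) *
            (((y j : ℝ)) * (iteratedDeriv ((j : ℕ) + 1) v x₀ / (((j : ℕ) + 1).factorial : ℝ))
                ^ (y j - 1) *
              (iteratedDeriv ((j : ℕ) + 2) v x₀ / (((j : ℕ) + 1).factorial : ℝ))))) x₀ := by
    refine HasDerivAt.fun_finsetProd (fun j hj => ?_)
    have hjn : (j : ℕ) + 1 < n + 1 := by
      have := Finset.ne_of_mem_erase hj
      have hlt : (j : ℕ) < n := Fin.val_lt_last this
      omega
    have hD : HasDerivAt (iteratedDeriv ((j : ℕ) + 1) v)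
        (iteratedDeriv ((j : ℕ) + 2) v x₀) x₀ := by
      have h1 := (hdiff ((j : ℕ) + 1) hjn).hasDerivAt
      have h2 : iteratedDeriv ((j : ℕ) + 2) v = deriv (iteratedDeriv ((j : ℕ) + 1) v) :=
        iteratedDeriv_succ
      rw [h2]
      exact h1
    exact ((hD.div_const _).pow _).const_mul _
  have key : (fun x => gT v (n + 1) y x) = fun x =>
      (((s - 1).factorial : ℝ) * (-1) ^ (s - 1)) *
        (((v x) ^ s)⁻¹ * ∏ i ∈ Finset.univ.erase (Fin.last n), fct v x ((i : ℕ) + 1) (y i)) := by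
    funext x
    rw [gT_eq, prod_univ_eq_erase (fun i m => fct v x ((i : ℕ) + 1) m) y (Fin.last n), hy,
      fct_zero, one_mul]
    rw [div_eq_mul_inv]
    ring
  rw [key]
  have hcast : (∑ i : Fin (n + 1), ((y i : ℝ))) = (s : ℝ) := by rw [hs]; push_cast; rfl
  rw [hcast]
  exact (hA.mul hB).const_mul ((((s - 1).factorial : ℝ)) * (-1) ^ (s - 1))

lemma sum_update_nat {M : ℕ} (y : Fin M → ℕ) (k : Fin M) (m : ℕ) :
    (∑ i, (Function.update y k m) i) + y k = (∑ i, y i) + m := by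
  have := sum_coeff_update (fun _ => 1) y k m
  simpa using this

lemma Aterm_eq (n : ℕ) (x₀ : ℝ) (v : ℝ → ℝ) (hv0 : v x₀ ≠ 0)
    (y : Fin (n + 1) → ℕ) (hy : y ∈ PS (n + 1) n) (hn : 1 ≤ n) :
    (((∑ i, y i) - 1).factorial : ℝ) * (-1) ^ ((∑ i, y i) - 1) *
        (-((((∑ i, y i)) : ℝ) * v x₀ ^ ((∑ i, y i) - 1) * iteratedDeriv 1 v x₀) /
          (v x₀ ^ (∑ i, y i)) ^ 2 *
        ∏ i ∈ Finset.univ.erase (Fin.last n), fct v x₀ ((i : ℕ) + 1) (y i))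
      = ((y 0 + 1 : ℕ) : ℝ) * gT v (n + 1) (Function.update y 0 (y 0 + 1)) x₀ := by
  classical
  set s := ∑ i, y i with hs
  have hs1 : 1 ≤ s := one_le_sum_of_mem_PS hy hn
  obtain ⟨t, ht⟩ : ∃ t, s = t + 1 := ⟨s - 1, by omega⟩
  have hysum : ∑ i, Function.update y 0 (y 0 + 1) i = s + 1 := by
    have := sum_update_nat y 0 (y 0 + 1)
    omega
  have hprod : (∏ i : Fin (n + 1), fct v x₀ ((i : ℕ) + 1) (Function.update y 0 (y 0 + 1) i))
      = fct v x₀ 1 (y 0 + 1) * ∏ i ∈ Finset.univ.erase (0 : Fin (n + 1)), fct v x₀ ((i : ℕ) + 1) (y i) := by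
    have := prod_update_erase (fun (i : Fin (n + 1)) m => fct v x₀ ((i : ℕ) + 1) m) y 0 (y 0 + 1)
    simpa using this
  have hylast : y (Fin.last n) = 0 := last_eq_zero_of_mem_PS hy
  have hPL : (∏ i ∈ Finset.univ.erase (Fin.last n), fct v x₀ ((i : ℕ) + 1) (y i))
      = fct v x₀ 1 (y 0) * ∏ i ∈ Finset.univ.erase (0 : Fin (n + 1)), fct v x₀ ((i : ℕ) + 1) (y i) := by
    have h1 := prod_univ_eq_erase (fun (i : Fin (n + 1)) m => fct v x₀ ((i : ℕ) + 1) m) y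
      (Fin.last n)
    rw [hylast, fct_zero, one_mul] at h1
    have h2 := prod_univ_eq_erase (fun (i : Fin (n + 1)) m => fct v x₀ ((i : ℕ) + 1) m) y 0
    rw [h1] at h2
    simpa using h2
  rw [gT_eq, hysum, hprod, hPL]
  have hcast : (∑ i : Fin (n + 1), ((y i : ℝ))) = (s : ℝ) := by rw [hs]; push_cast; rfl
  rw [hcast]
  simp only [Nat.add_sub_cancel, Function.update_self]
  unfold fct
  rw [ht]
  simp only [Nat.add_sub_cancel, Nat.factorial_one, Nat.factorial_succ]
  have hf1 : ((y 0).factorial : ℝ) ≠ 0 := Nat.cast_ne_zero.2 (Nat.factorial_ne_zero _)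
  have hf2 : ((t).factorial : ℝ) ≠ 0 := Nat.cast_ne_zero.2 (Nat.factorial_ne_zero _)
  push_cast
  field_simp
  ring

lemma prod_update_erase_S {M : ℕ} (f : Fin M → ℕ → ℝ) (y : Fin M → ℕ) (S : Finset (Fin M))
    (k : Fin M) (hk : k ∈ S) (m : ℕ) :
    (∏ i ∈ S, f i ((Function.update y k m) i)) = f k m * ∏ i ∈ S.erase k, f i (y i) := by
  classical
  rw [← Finset.mul_prod_erase S (fun i => f i ((Function.update y k m) i)) hk,
    Function.update_self]
  congr 1
  exact Finset.prod_congr rfl (fun i hi => by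
    rw [Function.update_of_ne (Finset.ne_of_mem_erase hi)])

def Bmap {n : ℕ} (j : Fin n) (y : Fin (n + 1) → ℕ) : Fin (n + 1) → ℕ :=
  Function.update (Function.update y j.castSucc (y j.castSucc - 1)) j.succ (y j.succ + 1)

lemma sum_Bmap {n : ℕ} (j : Fin n) (y : Fin (n + 1) → ℕ) (hyj : y j.castSucc ≠ 0) :
    ∑ i, Bmap j y i = ∑ i, y i := by
  have hne : j.succ ≠ j.castSucc := (Fin.castSucc_lt_succ (i := j)).ne'
  have h1 := sum_update_nat y j.castSucc (y j.castSucc - 1)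
  have h2 := sum_update_nat (Function.update y j.castSucc (y j.castSucc - 1)) j.succ
    (y j.succ + 1)
  rw [Function.update_of_ne hne] at h2
  have hle : y j.castSucc ≤ ∑ i, y i :=
    Finset.single_le_sum (fun _ _ => Nat.zero_le _) (Finset.mem_univ _)
  unfold Bmap
  omega

lemma coeffsum_Bmap {n : ℕ} (j : Fin n) (y : Fin (n + 1) → ℕ) (hyj : y j.castSucc ≠ 0) :
    ∑ i : Fin (n + 1), ((i : ℕ) + 1) * Bmap j y i = (∑ i : Fin (n + 1), ((i : ℕ) + 1) * y i) + 1 := by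
  have hne : j.succ ≠ j.castSucc := (Fin.castSucc_lt_succ (i := j)).ne'
  have h1 := sum_coeff_update (fun i : Fin (n + 1) => (i : ℕ) + 1) y j.castSucc
    (y j.castSucc - 1)
  have h2 := sum_coeff_update (fun i : Fin (n + 1) => (i : ℕ) + 1)
    (Function.update y j.castSucc (y j.castSucc - 1)) j.succ (y j.succ + 1)
  rw [Function.update_of_ne hne] at h2
  simp only [Fin.coe_castSucc, Fin.val_succ] at h1 h2
  have hle : ((j : ℕ) + 1) * y j.castSucc ≤ ∑ i : Fin (n + 1), ((i : ℕ) + 1) * y i := by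
    have := Finset.single_le_sum (f := fun i : Fin (n + 1) => ((i : ℕ) + 1) * y i)
      (fun _ _ => Nat.zero_le _) (Finset.mem_univ j.castSucc)
    simpa using this
  unfold Bmap
  have hyj1 : 1 ≤ y j.castSucc := Nat.one_le_iff_ne_zero.2 hyj
  have m1 : ((j : ℕ) + 1) * (y j.castSucc - 1) + ((j : ℕ) + 1) = ((j : ℕ) + 1) * y j.castSucc := by
    have hsp : y j.castSucc - 1 + 1 = y j.castSucc := Nat.succ_pred_eq_of_pos hyj1
    calc ((j : ℕ) + 1) * (y j.castSucc - 1) + ((j : ℕ) + 1)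
        = ((j : ℕ) + 1) * ((y j.castSucc - 1) + 1) := by ring
      _ = ((j : ℕ) + 1) * y j.castSucc := by rw [hsp]
  have m2 : ((j : ℕ) + 1 + 1) * (y j.succ + 1) = ((j : ℕ) + 1 + 1) * y j.succ + ((j : ℕ) + 2) := by
    ring
  omega

lemma Bterm_eq (n : ℕ) (x₀ : ℝ) (v : ℝ → ℝ) (hv0 : v x₀ ≠ 0) (j : Fin n)
    (y : Fin (n + 1) → ℕ) (hy : y ∈ PS (n + 1) n) (hyj : y j.castSucc ≠ 0) :
    (((∑ i, y i) - 1).factorial : ℝ) * (-1) ^ ((∑ i, y i) - 1) *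
        ((v x₀ ^ (∑ i, y i))⁻¹ *
        ((∏ k ∈ (Finset.univ.erase (Fin.last n)).erase j.castSucc,
            fct v x₀ ((k : ℕ) + 1) (y k)) •
          ((1 / ((y j.castSucc).factorial : ℝ)) *
            (((y j.castSucc : ℝ)) *
              (iteratedDeriv ((j.castSucc : ℕ) + 1) v x₀ /
                (((j.castSucc : ℕ) + 1).factorial : ℝ)) ^ (y j.castSucc - 1) *
              (iteratedDeriv ((j.castSucc : ℕ) + 2) v x₀ /
                (((j.castSucc : ℕ) + 1).factorial : ℝ))))))
      = (((j : ℕ) + 2 : ℕ) : ℝ) * ((y j.succ + 1 : ℕ) : ℝ) * gT v (n + 1) (Bmap j y) x₀ := by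
  classical
  have hne : j.castSucc ≠ j.succ := (Fin.castSucc_lt_succ (i := j)).ne
  have hlast : j.castSucc ≠ Fin.last n := (Fin.castSucc_lt_last j).ne
  have hylast : y (Fin.last n) = 0 := last_eq_zero_of_mem_PS hy
  set f : Fin (n + 1) → ℕ → ℝ := fun i m => fct v x₀ ((i : ℕ) + 1) m with hf
  -- expand the product in gT (Bmap j y)
  have hprod : (∏ i : Fin (n + 1), f i (Bmap j y i))
      = f j.succ (y j.succ + 1) * (f j.castSucc (y j.castSucc - 1) *
          ∏ i ∈ (Finset.univ.erase j.succ).erase j.castSucc, f i (y i)) := by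
    unfold Bmap
    rw [prod_update_erase f _ j.succ (y j.succ + 1)]
    rw [prod_update_erase_S f y (Finset.univ.erase j.succ) j.castSucc
      (Finset.mem_erase.2 ⟨hne, Finset.mem_univ _⟩) (y j.castSucc - 1)]
  -- convert the LHS product
  have hPL : (∏ k ∈ (Finset.univ.erase (Fin.last n)).erase j.castSucc, f k (y k))
      = f j.succ (y j.succ) * ∏ i ∈ (Finset.univ.erase j.succ).erase j.castSucc, f i (y i) := by
    rw [Finset.erase_right_comm]
    have h1 : (∏ k ∈ Finset.univ.erase j.castSucc, f k (y k))
        = f (Fin.last n) (y (Fin.last n)) *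
          ∏ k ∈ (Finset.univ.erase j.castSucc).erase (Fin.last n), f k (y k) :=
      (Finset.mul_prod_erase _ _ (Finset.mem_erase.2 ⟨(Ne.symm hlast), Finset.mem_univ _⟩)).symm
    rw [hylast, hf] at h1
    simp only [fct_zero, one_mul] at h1
    rw [← h1]
    have h2 : (∏ k ∈ Finset.univ.erase j.castSucc, f k (y k))
        = f j.succ (y j.succ) * ∏ k ∈ (Finset.univ.erase j.castSucc).erase j.succ, f k (y k) :=
      (Finset.mul_prod_erase _ _ (Finset.mem_erase.2 ⟨Ne.symm hne, Finset.mem_univ _⟩)).symm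
    rw [h2, Finset.erase_right_comm]
  rw [gT_eq, sum_Bmap j y hyj, hprod, hPL]
  obtain ⟨w, hw⟩ : ∃ w, y j.castSucc = w + 1 := ⟨y j.castSucc - 1, by omega⟩
  rw [hw]
  simp only [Nat.add_sub_cancel, hf, smul_eq_mul]
  unfold fct
  simp only [Fin.coe_castSucc, Fin.val_succ]
  have e1 : (j : ℕ) + 1 + 1 = (j : ℕ) + 2 := rfl
  rw [e1]
  have hfac1 : (((j : ℕ) + 2).factorial : ℝ) = ((j : ℕ) + 2) * (((j : ℕ) + 1).factorial : ℝ) := by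
    rw [show (j : ℕ) + 2 = ((j : ℕ) + 1) + 1 from rfl, Nat.factorial_succ]
    push_cast
    ring
  have hfac2 : ((w + 1).factorial : ℝ) = (w + 1) * (w.factorial : ℝ) := by
    rw [Nat.factorial_succ]; push_cast; ring
  have hfac3 : ((y j.succ + 1).factorial : ℝ) = (y j.succ + 1) * ((y j.succ).factorial : ℝ) := by
    rw [Nat.factorial_succ]; push_cast; ring
  rw [hfac1, hfac2, hfac3]
  have hne1 : (((j : ℕ) + 1).factorial : ℝ) ≠ 0 := Nat.cast_ne_zero.2 (Nat.factorial_ne_zero _)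
  have hne2 : ((w.factorial : ℝ)) ≠ 0 := Nat.cast_ne_zero.2 (Nat.factorial_ne_zero _)
  have hne3 : (((y j.succ).factorial : ℝ)) ≠ 0 := Nat.cast_ne_zero.2 (Nat.factorial_ne_zero _)
  have hne4 : (v x₀ ^ (∑ i, y i)) ≠ 0 := pow_ne_zero _ hv0
  push_cast
  field_simp
  have hD : (((j : ℕ) : ℝ) + 2) * (((j : ℕ) + 1).factorial : ℝ) ≠ 0 := by positivity
  have hA : (((j : ℕ) : ℝ) + 2) * (((j : ℕ) + 1).factorial : ℝ) *
      (iteratedDeriv ((j : ℕ) + 2) v x₀ / ((((j : ℕ) : ℝ) + 2) * (((j : ℕ) + 1).factorial : ℝ)))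
      = iteratedDeriv ((j : ℕ) + 2) v x₀ := by field_simp
  linear_combination (-((∏ x ∈ (univ.erase j.succ).erase j.castSucc,
      (iteratedDeriv ((x : ℕ) + 1) v x₀ / (((x : ℕ) + 1).factorial : ℝ)) ^ y x /
        ((y x).factorial : ℝ)) *
      (iteratedDeriv ((j : ℕ) + 1) v x₀ / (((j : ℕ) + 1).factorial : ℝ)) ^ w *
      (iteratedDeriv ((j : ℕ) + 2) v x₀ /
        ((((j : ℕ) : ℝ) + 2) * (((j : ℕ) + 1).factorial : ℝ))) ^ y j.succ)) * hA

lemma mem_filter_PS_iff {M m : ℕ} (p : (Fin M → ℕ) → Prop) [DecidablePred p]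
    (y : Fin M → ℕ) :
    y ∈ (PS M m).filter p ↔ (∑ i : Fin M, ((i : ℕ) + 1) * y i = m) ∧ p y := by
  constructor
  · intro h
    exact ⟨sum_eq_of_mem_PS (Finset.mem_filter.1 h).1, (Finset.mem_filter.1 h).2⟩
  · rintro ⟨h1, h2⟩
    exact Finset.mem_filter.2 ⟨mem_PS h1, h2⟩

lemma sumA (n : ℕ) (hn : 1 ≤ n) (x₀ : ℝ) (v : ℝ → ℝ) (hv0 : v x₀ ≠ 0) :
    (∑ y ∈ PS (n + 1) n,
      (((∑ i, y i) - 1).factorial : ℝ) * (-1) ^ ((∑ i, y i) - 1) *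
        (-((((∑ i, y i)) : ℝ) * v x₀ ^ ((∑ i, y i) - 1) * iteratedDeriv 1 v x₀) /
          (v x₀ ^ (∑ i, y i)) ^ 2 *
        ∏ i ∈ Finset.univ.erase (Fin.last n), fct v x₀ ((i : ℕ) + 1) (y i)))
      = ∑ z ∈ PS (n + 1) (n + 1), (z 0 : ℝ) * gT v (n + 1) z x₀ := by
  classical
  have hfil := Finset.sum_filter_of_ne (s := PS (n + 1) (n + 1))
    (f := fun z => (z 0 : ℝ) * gT v (n + 1) z x₀)
    (p := fun z : Fin (n + 1) → ℕ => z 0 ≠ 0)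
    (fun z _ hne h0 => hne (by simp [h0]))
  rw [← hfil]
  refine Finset.sum_nbij' (i := fun y => Function.update y 0 (y 0 + 1))
    (j := fun z => Function.update z 0 (z 0 - 1)) ?_ ?_ ?_ ?_ ?_
  · intro y hy
    refine (mem_filter_PS_iff _ _).2 ⟨?_, by simp⟩
    have h := sum_coeff_update (fun i : Fin (n + 1) => (i : ℕ) + 1) y 0 (y 0 + 1)
    simp only [Fin.val_zero] at h
    have := sum_eq_of_mem_PS hy
    beta_reduce
    omega
  · intro z hz
    obtain ⟨hz1, hz2⟩ := (mem_filter_PS_iff _ _).1 hz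
    refine mem_PS ?_
    have h := sum_coeff_update (fun i : Fin (n + 1) => (i : ℕ) + 1) z 0 (z 0 - 1)
    simp only [Fin.val_zero] at h
    have hz0 : 1 ≤ z 0 := Nat.one_le_iff_ne_zero.2 hz2
    beta_reduce
    omega
  · intro y _
    funext i
    simp only [Function.update_apply]
    split_ifs with h1 <;> simp_all
  · intro z hz
    obtain ⟨_, hz2⟩ := (mem_filter_PS_iff _ _).1 hz
    have hz0 : 1 ≤ z 0 := Nat.one_le_iff_ne_zero.2 hz2
    funext i
    simp only [Function.update_apply]
    split_ifs with h1 <;> simp_all <;> omega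
  · intro y hy
    refine (Aterm_eq n x₀ v hv0 y hy hn).trans ?_
    beta_reduce
    rw [Function.update_self]

lemma coeffsum_Cmap {n : ℕ} (j : Fin n) (z : Fin (n + 1) → ℕ) (hzj : z j.succ ≠ 0) :
    (∑ i : Fin (n + 1), ((i : ℕ) + 1) *
      (Function.update (Function.update z j.succ (z j.succ - 1)) j.castSucc
        (z j.castSucc + 1)) i) + 1 = ∑ i : Fin (n + 1), ((i : ℕ) + 1) * z i := by
  have hne : j.castSucc ≠ j.succ := (Fin.castSucc_lt_succ (i := j)).ne
  have h1 := sum_coeff_update (fun i : Fin (n + 1) => (i : ℕ) + 1) z j.succ (z j.succ - 1)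
  have h2 := sum_coeff_update (fun i : Fin (n + 1) => (i : ℕ) + 1)
    (Function.update z j.succ (z j.succ - 1)) j.castSucc (z j.castSucc + 1)
  rw [Function.update_of_ne hne] at h2
  simp only [Fin.coe_castSucc, Fin.val_succ] at h1 h2
  have hzj1 : 1 ≤ z j.succ := Nat.one_le_iff_ne_zero.2 hzj
  have m1 : ((j : ℕ) + 1 + 1) * (z j.succ - 1) + ((j : ℕ) + 2) = ((j : ℕ) + 1 + 1) * z j.succ := by
    have hsp : z j.succ - 1 + 1 = z j.succ := Nat.succ_pred_eq_of_pos hzj1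
    calc ((j : ℕ) + 1 + 1) * (z j.succ - 1) + ((j : ℕ) + 2)
        = ((j : ℕ) + 1 + 1) * ((z j.succ - 1) + 1) := by ring
      _ = ((j : ℕ) + 1 + 1) * z j.succ := by rw [hsp]
  have m2 : ((j : ℕ) + 1) * (z j.castSucc + 1) = ((j : ℕ) + 1) * z j.castSucc + ((j : ℕ) + 1) := by
    ring
  have hle : ((j : ℕ) + 1 + 1) * z j.succ ≤ ∑ i : Fin (n + 1), ((i : ℕ) + 1) * z i := by
    have := Finset.single_le_sum (f := fun i : Fin (n + 1) => ((i : ℕ) + 1) * z i)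
      (fun _ _ => Nat.zero_le _) (Finset.mem_univ j.succ)
    simpa using this
  omega

lemma sumB (n : ℕ) (x₀ : ℝ) (v : ℝ → ℝ) (hv0 : v x₀ ≠ 0) (j : Fin n) :
    (∑ y ∈ PS (n + 1) n,
      (((∑ i, y i) - 1).factorial : ℝ) * (-1) ^ ((∑ i, y i) - 1) *
        ((v x₀ ^ (∑ i, y i))⁻¹ *
        ((∏ k ∈ (Finset.univ.erase (Fin.last n)).erase j.castSucc,
            fct v x₀ ((k : ℕ) + 1) (y k)) •
          ((1 / ((y j.castSucc).factorial : ℝ)) *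
            (((y j.castSucc : ℝ)) *
              (iteratedDeriv ((j.castSucc : ℕ) + 1) v x₀ /
                (((j.castSucc : ℕ) + 1).factorial : ℝ)) ^ (y j.castSucc - 1) *
              (iteratedDeriv ((j.castSucc : ℕ) + 2) v x₀ /
                (((j.castSucc : ℕ) + 1).factorial : ℝ)))))))
      = ∑ z ∈ PS (n + 1) (n + 1),
          (((j : ℕ) + 2 : ℕ) : ℝ) * (z j.succ : ℝ) * gT v (n + 1) z x₀ := by
  classical
  have hne : j.castSucc ≠ j.succ := (Fin.castSucc_lt_succ (i := j)).ne
  have hfilR := Finset.sum_filter_of_ne (s := PS (n + 1) (n + 1))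
    (f := fun z => (((j : ℕ) + 2 : ℕ) : ℝ) * (z j.succ : ℝ) * gT v (n + 1) z x₀)
    (p := fun z : Fin (n + 1) → ℕ => z j.succ ≠ 0)
    (fun z _ hne' h0 => hne' (by simp [h0]))
  rw [← hfilR]
  have hfilL := Finset.sum_filter_of_ne (s := PS (n + 1) n)
    (f := fun y => (((∑ i, y i) - 1).factorial : ℝ) * (-1) ^ ((∑ i, y i) - 1) *
        ((v x₀ ^ (∑ i, y i))⁻¹ *
        ((∏ k ∈ (Finset.univ.erase (Fin.last n)).erase j.castSucc,
            fct v x₀ ((k : ℕ) + 1) (y k)) •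
          ((1 / ((y j.castSucc).factorial : ℝ)) *
            (((y j.castSucc : ℝ)) *
              (iteratedDeriv ((j.castSucc : ℕ) + 1) v x₀ /
                (((j.castSucc : ℕ) + 1).factorial : ℝ)) ^ (y j.castSucc - 1) *
              (iteratedDeriv ((j.castSucc : ℕ) + 2) v x₀ /
                (((j.castSucc : ℕ) + 1).factorial : ℝ)))))))
    (p := fun y : Fin (n + 1) → ℕ => y j.castSucc ≠ 0)
    (fun y _ hne' h0 => hne' (by simp [h0]))
  rw [← hfilL]
  refine Finset.sum_nbij' (i := fun y => Bmap j y)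
    (j := fun z => Function.update (Function.update z j.succ (z j.succ - 1)) j.castSucc
      (z j.castSucc + 1)) ?_ ?_ ?_ ?_ ?_
  · intro y hy
    obtain ⟨hy1, hy2⟩ := (mem_filter_PS_iff _ _).1 hy
    refine (mem_filter_PS_iff _ _).2 ⟨?_, ?_⟩
    · rw [coeffsum_Bmap j y hy2, hy1]
    · simp [Bmap]
  · intro z hz
    obtain ⟨hz1, hz2⟩ := (mem_filter_PS_iff _ _).1 hz
    refine (mem_filter_PS_iff _ _).2 ⟨?_, ?_⟩
    · have h := coeffsum_Cmap j z hz2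
      beta_reduce
      omega
    · simp
  · intro y hy
    obtain ⟨_, hy2⟩ := (mem_filter_PS_iff _ _).1 hy
    have hy1 : 1 ≤ y j.castSucc := Nat.one_le_iff_ne_zero.2 hy2
    funext i
    simp only [Bmap, Function.update_apply]
    split_ifs with h1 h2 <;> simp_all <;> omega
  · intro z hz
    obtain ⟨_, hz2⟩ := (mem_filter_PS_iff _ _).1 hz
    have hz1 : 1 ≤ z j.succ := Nat.one_le_iff_ne_zero.2 hz2
    funext i
    simp only [Bmap, Function.update_apply]
    split_ifs with h1 h2 <;> simp_all <;> omega
  · intro y hy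
    obtain ⟨hy1, hy2⟩ := (mem_filter_PS_iff _ _).1 hy
    refine (Bterm_eq n x₀ v hv0 j y (mem_PS hy1) hy2).trans ?_
    beta_reduce
    unfold Bmap
    rw [Function.update_self]

theorem main_formula (n : ℕ) (hn : 1 ≤ n) :
    ∀ (x₀ : ℝ) (v : ℝ → ℝ),
      (∀ i < n, ∀ᶠ x in nhds x₀, DifferentiableAt ℝ (iteratedDeriv i v) x) →
      (∀ᶠ x in nhds x₀, 0 < v x) →
      iteratedDeriv n (fun x => Real.log (v x)) x₀ =
        (n.factorial : ℝ) * ∑ y ∈ PS n n, gT v n y x₀ := by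
  induction n, hn using Nat.le_induction with
  | base =>
    intro x₀ v hv hvpos
    have hvx : 0 < v x₀ := hvpos.self_of_nhds
    have hvd : DifferentiableAt ℝ v x₀ := by
      have := (hv 0 one_pos).self_of_nhds
      rwa [iteratedDeriv_zero] at this
    have hlog : HasDerivAt (fun x => Real.log (v x)) (deriv v x₀ / v x₀) x₀ :=
      hvd.hasDerivAt.log (ne_of_gt hvx)
    have hPS : PS 1 1 = {fun _ => 1} := by
      ext y
      rw [Finset.mem_singleton]
      constructor
      · intro h
        have := sum_eq_of_mem_PS h
        rw [Fin.sum_univ_one] at this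
        simp at this
        funext i
        fin_cases i
        exact this
      · rintro rfl
        apply mem_PS
        rw [Fin.sum_univ_one]
        simp
    rw [iteratedDeriv_one, hlog.deriv, hPS, Finset.sum_singleton]
    rw [gT_eq]
    simp [fct, Fin.sum_univ_one, Fin.prod_univ_one, iteratedDeriv_one]
    ring
  | succ n hn IH =>
    intro x₀ v hv hvpos
    have hv' : ∀ᶠ x in nhds x₀, ∀ i < n + 1, DifferentiableAt ℝ (iteratedDeriv i v) x := by
      have h1 : ∀ i ∈ Finset.range (n + 1), ∀ᶠ x in nhds x₀,
          DifferentiableAt ℝ (iteratedDeriv i v) x :=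
        fun i hi => hv i (Finset.mem_range.1 hi)
      have h2 := (Filter.eventually_all_finset (Finset.range (n + 1))).2 h1
      exact h2.mono (fun x hx i hi => hx i (Finset.mem_range.2 hi))
    have HH : ∀ᶠ x in nhds x₀, iteratedDeriv n (fun t => Real.log (v t)) x =
        (n.factorial : ℝ) * ∑ y ∈ PS n n, gT v n y x := by
      filter_upwards [hv'.eventually_nhds, hvpos.eventually_nhds] with x h1 h2
      exact IH x v (fun i hi => h1.mono (fun x' hx' => hx' i (by omega))) h2
    have hdx : ∀ i < n + 1, DifferentiableAt ℝ (iteratedDeriv i v) x₀ :=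
      fun i hi => (hv i hi).self_of_nhds
    have hvx : 0 < v x₀ := hvpos.self_of_nhds
    have hv0 : v x₀ ≠ 0 := ne_of_gt hvx
    rw [iteratedDeriv_succ, Filter.EventuallyEq.deriv_eq HH]
    have hbr : (fun x => (n.factorial : ℝ) * ∑ y ∈ PS n n, gT v n y x)
        = fun x => (n.factorial : ℝ) * ∑ y ∈ PS (n + 1) n, gT v (n + 1) y x :=
      funext fun x => by rw [sum_PS_succ]
    rw [hbr]
    have hder : HasDerivAt
        (fun x => (n.factorial : ℝ) * ∑ y ∈ PS (n + 1) n, gT v (n + 1) y x)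
        ((n.factorial : ℝ) * ∑ y ∈ PS (n + 1) n,
          ((((∑ i, y i) - 1).factorial : ℝ) * (-1) ^ ((∑ i, y i) - 1) *
            ((-(((∑ i, y i) : ℝ) * v x₀ ^ ((∑ i, y i) - 1) * iteratedDeriv 1 v x₀) /
                (v x₀ ^ (∑ i, y i)) ^ 2) *
              (∏ i ∈ Finset.univ.erase (Fin.last n), fct v x₀ ((i : ℕ) + 1) (y i)) +
            (v x₀ ^ (∑ i, y i))⁻¹ *
              ∑ j ∈ Finset.univ.erase (Fin.last n),
                (∏ k ∈ (Finset.univ.erase (Fin.last n)).erase j,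
                    fct v x₀ ((k : ℕ) + 1) (y k)) •
                  ((1 / ((y j).factorial : ℝ)) *
                    (((y j : ℝ)) *
                      (iteratedDeriv ((j : ℕ) + 1) v x₀ /
                        (((j : ℕ) + 1).factorial : ℝ)) ^ (y j - 1) *
                      (iteratedDeriv ((j : ℕ) + 2) v x₀ /
                        (((j : ℕ) + 1).factorial : ℝ))))))) x₀ :=
      HasDerivAt.const_mul _ (HasDerivAt.fun_sum (fun y hy =>
        hasDerivAt_gT n x₀ v hdx hv0 y (last_eq_zero_of_mem_PS hy)))
    rw [hder.deriv]
    have key : (∑ y ∈ PS (n + 1) n,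
          ((((∑ i, y i) - 1).factorial : ℝ) * (-1) ^ ((∑ i, y i) - 1) *
            ((-(((∑ i, y i) : ℝ) * v x₀ ^ ((∑ i, y i) - 1) * iteratedDeriv 1 v x₀) /
                (v x₀ ^ (∑ i, y i)) ^ 2) *
              (∏ i ∈ Finset.univ.erase (Fin.last n), fct v x₀ ((i : ℕ) + 1) (y i)) +
            (v x₀ ^ (∑ i, y i))⁻¹ *
              ∑ j ∈ Finset.univ.erase (Fin.last n),
                (∏ k ∈ (Finset.univ.erase (Fin.last n)).erase j,
                    fct v x₀ ((k : ℕ) + 1) (y k)) •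
                  ((1 / ((y j).factorial : ℝ)) *
                    (((y j : ℝ)) *
                      (iteratedDeriv ((j : ℕ) + 1) v x₀ /
                        (((j : ℕ) + 1).factorial : ℝ)) ^ (y j - 1) *
                      (iteratedDeriv ((j : ℕ) + 2) v x₀ /
                        (((j : ℕ) + 1).factorial : ℝ)))))))
        = ((n : ℝ) + 1) * ∑ z ∈ PS (n + 1) (n + 1), gT v (n + 1) z x₀ := by
      have step1 : ∀ y ∈ PS (n + 1) n,
          ((((∑ i, y i) - 1).factorial : ℝ) * (-1) ^ ((∑ i, y i) - 1) *
            ((-(((∑ i, y i) : ℝ) * v x₀ ^ ((∑ i, y i) - 1) * iteratedDeriv 1 v x₀) /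
                (v x₀ ^ (∑ i, y i)) ^ 2) *
              (∏ i ∈ Finset.univ.erase (Fin.last n), fct v x₀ ((i : ℕ) + 1) (y i)) +
            (v x₀ ^ (∑ i, y i))⁻¹ *
              ∑ j ∈ Finset.univ.erase (Fin.last n),
                (∏ k ∈ (Finset.univ.erase (Fin.last n)).erase j,
                    fct v x₀ ((k : ℕ) + 1) (y k)) •
                  ((1 / ((y j).factorial : ℝ)) *
                    (((y j : ℝ)) *
                      (iteratedDeriv ((j : ℕ) + 1) v x₀ /
                        (((j : ℕ) + 1).factorial : ℝ)) ^ (y j - 1) *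
                      (iteratedDeriv ((j : ℕ) + 2) v x₀ /
                        (((j : ℕ) + 1).factorial : ℝ))))))
          = ((((∑ i, y i) - 1).factorial : ℝ) * (-1) ^ ((∑ i, y i) - 1) *
              (-(((∑ i, y i) : ℝ) * v x₀ ^ ((∑ i, y i) - 1) * iteratedDeriv 1 v x₀) /
                (v x₀ ^ (∑ i, y i)) ^ 2 *
              ∏ i ∈ Finset.univ.erase (Fin.last n), fct v x₀ ((i : ℕ) + 1) (y i)))
            + ∑ j ∈ Finset.univ.erase (Fin.last n),
              ((((∑ i, y i) - 1).factorial : ℝ) * (-1) ^ ((∑ i, y i) - 1) *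
                ((v x₀ ^ (∑ i, y i))⁻¹ *
                ((∏ k ∈ (Finset.univ.erase (Fin.last n)).erase j,
                    fct v x₀ ((k : ℕ) + 1) (y k)) •
                  ((1 / ((y j).factorial : ℝ)) *
                    (((y j : ℝ)) *
                      (iteratedDeriv ((j : ℕ) + 1) v x₀ /
                        (((j : ℕ) + 1).factorial : ℝ)) ^ (y j - 1) *
                      (iteratedDeriv ((j : ℕ) + 2) v x₀ /
                        (((j : ℕ) + 1).factorial : ℝ))))))) := by
        intro y _
        rw [mul_add, Finset.mul_sum, Finset.mul_sum]
      rw [Finset.sum_congr rfl step1, Finset.sum_add_distrib, Finset.sum_comm,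
        sumA n hn x₀ v hv0]
      rw [sum_erase_last]
      rw [Finset.sum_congr rfl (fun j (_ : j ∈ (Finset.univ : Finset (Fin n))) =>
        sumB n x₀ v hv0 j)]
      rw [Finset.sum_comm, ← Finset.sum_add_distrib, Finset.mul_sum]
      refine Finset.sum_congr rfl (fun z hz => ?_)
      have hz' := sum_eq_of_mem_PS hz
      have hcast : ((n : ℝ) + 1) = ∑ i : Fin (n + 1), (((i : ℕ) : ℝ) + 1) * (z i : ℝ) := by
        have hc := congrArg (Nat.cast : ℕ → ℝ) hz'
        push_cast at hc
        exact hc.symm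
      have h2 : (((n : ℝ) + 1) * gT v (n + 1) z x₀)
          = ∑ i : Fin (n + 1), ((((i : ℕ) : ℝ) + 1) * (z i : ℝ)) * gT v (n + 1) z x₀ := by
        rw [← Finset.sum_mul, ← hcast]
      rw [h2, Fin.sum_univ_succ]
      congr 1
      · simp
      · refine Finset.sum_congr rfl (fun j _ => by rw [Fin.val_succ]; push_cast; ring)
    rw [key, Nat.factorial_succ]
    push_cast
    ring


theorem iteratedDeriv_log_comp (n : ℕ) (hn : 1 ≤ n) (x₀ : ℝ) (v : ℝ → ℝ)
    (hv : ∀ i < n, ∀ᶠ x in nhds x₀, DifferentiableAt ℝ (iteratedDeriv i v) x)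
    (hvpos : ∀ᶠ x in nhds x₀, 0 < v x) :
    iteratedDeriv n (fun x => Real.log (v x)) x₀ =
      (n.factorial : ℝ) *
        ∑ y ∈ (Fintype.piFinset fun _ : Fin n => Finset.range (n + 1)).filter
            (fun y => ∑ i : Fin n, ((i : ℕ) + 1) * y i = n),
          (((∑ i, y i) - 1).factorial : ℝ) * (-1) ^ ((∑ i, y i) - 1) /
              (v x₀) ^ (∑ i, y i) *
            ∏ i : Fin n,
              (1 / ((y i).factorial : ℝ)) *
                (iteratedDeriv ((i : ℕ) + 1) v x₀ / (((i : ℕ) + 1).factorial : ℝ)) ^ y i := by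
  exact main_formula n hn x₀ v hv hvpos
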